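/- arXiv:0812.4291 — 2 statements merged into one kernel-verified Lean document; each statement's English description precedes it below -/
import Mathlib

section
/- With the blocking relation ≤ on subsets of the vertex set of a tree (with respect to a fixed nonempty subset V), if U ∼ U' (i.e. U ≤ U' and U' ≤ U), then U ∩ U' ∼ U and U ∪ U' ∼ U. -/
/-- `U'` blocks `U` from `V` in the graph `G`: for every `u ∈ U` and `v ∈ V`
there is some `u' ∈ U'` lying on the (unique, when `G` is a tree) path from `u` to `v`. -/
def Blocks {S : Type*} (G : SimpleGraph S) (V U' U : Set S) : Prop :=
  ∀ u ∈ U, ∀ v ∈ V, ∃ u' ∈ U', ∀ (p : G.Walk u v), p.IsPath → u' ∈ p.support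

/-- `U ∼ U'`: each blocks the other from `V`. -/
def BlockEquiv {S : Type*} (G : SimpleGraph S) (V U U' : Set S) : Prop :=
  Blocks G V U U' ∧ Blocks G V U' U

private lemma key_lemma {S : Type*} (G : SimpleGraph S) (hG : G.IsTree)
    (V U U' : Set S) (h1 : Blocks G V U U') (h2 : Blocks G V U' U)
    {v : S} (hv : v ∈ V) :
    ∀ n : ℕ, ∀ x, x ∈ U' → ∀ p : G.Walk x v, p.IsPath → p.length ≤ n →
      ∃ w ∈ U ∩ U', w ∈ p.support := by
  classical
  intro n
  induction n with
  | zero =>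
    intro x hx p hp hlen
    obtain ⟨b, hbU, hb⟩ := h1 x hx v hv
    have hbsupp := hb p hp
    have : x = v := SimpleGraph.Walk.eq_of_length_eq_zero (Nat.le_zero.mp hlen)
    subst this
    -- p has length 0, so its support is [x]; hence b = x
    have hx' : b = x := by
      cases p with
      | nil => simpa using hbsupp
      | cons h q => simp at hlen
    subst hx'
    exact ⟨b, ⟨hbU, hx⟩, hbsupp⟩
  | succ n ih =>
    intro x hx p hp hlen
    obtain ⟨b, hbU, hb⟩ := h1 x hx v hv
    have hbsupp := hb p hp
    by_cases hbx : b = x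
    · subst hbx
      exact ⟨b, ⟨hbU, hx⟩, hbsupp⟩
    · set q := p.dropUntil b hbsupp with hq
      have hqpath : q.IsPath := hp.dropUntil hbsupp
      have hqlen : q.length < p.length := by
        have hsplit := congr_arg SimpleGraph.Walk.length (p.take_spec hbsupp)
        rw [SimpleGraph.Walk.length_append] at hsplit
        have htake : (p.takeUntil b hbsupp).length ≠ 0 := fun h0 =>
          hbx (SimpleGraph.Walk.eq_of_length_eq_zero h0).symm
        have hqeq : q.length = (p.dropUntil b hbsupp).length := rfl
        omega
      obtain ⟨c, hcU', hc⟩ := h2 b hbU v hv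
      have hcsupp := hc q hqpath
      set r := q.dropUntil c hcsupp with hr
      have hrpath : r.IsPath := hqpath.dropUntil hcsupp
      have hrlen : r.length ≤ n := by
        have := q.length_dropUntil_le hcsupp
        have hreq : r.length = (q.dropUntil c hcsupp).length := rfl
        omega
      obtain ⟨w, hwUU', hwr⟩ := ih c hcU' r hrpath hrlen
      exact ⟨w, hwUU',
        p.support_dropUntil_subset hbsupp (q.support_dropUntil_subset hcsupp hwr)⟩

private lemma inter_blocks {S : Type*} (G : SimpleGraph S) (hG : G.IsTree)
    (V U U' : Set S) (h1 : Blocks G V U U') (h2 : Blocks G V U' U) :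
    Blocks G V (U ∩ U') U := by
  classical
  intro u hu v hv
  obtain ⟨p, hp⟩ := (hG.existsUnique_path u v).exists
  obtain ⟨a, haU', ha⟩ := h2 u hu v hv
  have hasupp := ha p hp
  set q := p.dropUntil a hasupp with hqdef
  have hqpath : q.IsPath := hp.dropUntil hasupp
  obtain ⟨w, hwUU', hwq⟩ :=
    key_lemma G hG V U U' h1 h2 hv q.length a haU' q hqpath le_rfl
  refine ⟨w, hwUU', fun p' hp' => ?_⟩
  have : p' = p := (hG.existsUnique_path u v).unique hp' hp
  subst this
  exact p'.support_dropUntil_subset hasupp hwq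

/-- if `U ∼ U'` then `U ∩ U' ∼ U` and `U ∪ U' ∼ U`. -/
theorem blockEquiv_inter_union {S : Type*} [Fintype S] (G : SimpleGraph S)
    (hG : G.IsTree) (V : Set S) (hV : V.Nonempty) (U U' : Set S)
    (h : BlockEquiv G V U U') :
    BlockEquiv G V (U ∩ U') U ∧ BlockEquiv G V (U ∪ U') U := by
  obtain ⟨h1, h2⟩ := h
  refine ⟨⟨inter_blocks G hG V U U' h1 h2, ?_⟩, ⟨?_, ?_⟩⟩
  · -- U blocks U ∩ U'
    intro u hu v hv
    exact ⟨u, hu.1, fun p _ => p.start_mem_support⟩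
  · -- U ∪ U' blocks U
    intro u hu v hv
    exact ⟨u, Or.inl hu, fun p _ => p.start_mem_support⟩
  · -- U blocks U ∪ U'
    intro u hu v hv
    rcases hu with hu | hu
    · exact ⟨u, hu, fun p _ => p.start_mem_support⟩
    · exact h1 u hu v hv
end

section
/- Every equivalence class of the blocking equivalence relation ∼ on subsets of the vertex set of a tree contains a unique smallest element and a unique largest element with respect to inclusion. -/
section Aux

open SimpleGraph

variable {S : Type*} [DecidableEq S] {G : SimpleGraph S} {V : Set S}

lemma blocks_refl (U : Set S) : Blocks G V U U :=
  fun u hu _ _ => ⟨u, hu, fun p _ => p.start_mem_support⟩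

lemma tree_path_eq (hG : G.IsTree) {u v : S} (p q : G.Walk u v)
    (hp : p.IsPath) (hq : q.IsPath) : p = q :=
  ((hG.existsUnique_path u v).unique hp hq)

lemma blocks_trans (hG : G.IsTree) {A B C : Set S}
    (hAB : Blocks G V A B) (hBC : Blocks G V B C) : Blocks G V A C := by
  intro c hc v hv
  obtain ⟨p, hp⟩ := (hG.existsUnique_path c v).exists
  obtain ⟨b, hb, hbp⟩ := hBC c hc v hv
  have hbsup : b ∈ p.support := hbp p hp
  have hq : (p.dropUntil b hbsup).IsPath := hp.dropUntil hbsup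
  obtain ⟨a, ha, hap⟩ := hAB b hb v hv
  refine ⟨a, ha, fun r hr => ?_⟩
  rw [tree_path_eq hG r p hr hp]
  exact p.support_dropUntil_subset hbsup (hap _ hq)

lemma blocks_inter (hG : G.IsTree) {W₁ W₂ U : Set S}
    (h1 : BlockEquiv G V W₁ U) (h2 : BlockEquiv G V W₂ U) :
    Blocks G V (W₁ ∩ W₂) U := by
  classical
  intro u hu v hv
  obtain ⟨p, hp⟩ := (hG.existsUnique_path u v).exists
  have h21 : Blocks G V W₂ W₁ := blocks_trans hG h2.1 h1.2
  have h12 : Blocks G V W₁ W₂ := blocks_trans hG h1.1 h2.2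
  have hex : ∃ n, ∃ w, ∃ hw : w ∈ W₁ ∧ w ∈ p.support, (p.dropUntil w hw.2).length = n := by
    obtain ⟨w, hwW, hwp⟩ := h1.1 u hu v hv
    exact ⟨_, w, ⟨hwW, hwp p hp⟩, rfl⟩
  obtain ⟨w₁, ⟨hw₁W, hw₁p⟩, hlen⟩ := Nat.find_spec hex
  -- q₁ : the path from w₁ to v
  set q₁ := p.dropUntil w₁ hw₁p with hq₁def
  have hq₁ : q₁.IsPath := hp.dropUntil hw₁p
  obtain ⟨w₂, hw₂W, hw₂p⟩ := h21 w₁ hw₁W v hv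
  have hw₂ : w₂ ∈ q₁.support := hw₂p q₁ hq₁
  set q₂ := q₁.dropUntil w₂ hw₂ with hq₂def
  have hq₂ : q₂.IsPath := hq₁.dropUntil hw₂
  obtain ⟨w₁', hw₁'W, hw₁'p⟩ := h12 w₂ hw₂W v hv
  have hw₁' : w₁' ∈ q₂.support := hw₁'p q₂ hq₂
  have hs : w₁' ∈ q₁.support := q₁.support_dropUntil_subset hw₂ hw₁'
  have hps : w₁' ∈ p.support := p.support_dropUntil_subset hw₁p hs
  -- w₁' = w₁ by minimality
  have key : p.dropUntil w₁' hps = q₁.dropUntil w₁' hs :=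
    tree_path_eq hG _ _ (hp.dropUntil hps) (hq₁.dropUntil hs)
  have hsum : (q₁.takeUntil w₁' hs).length + (q₁.dropUntil w₁' hs).length = q₁.length := by
    have := congr_arg SimpleGraph.Walk.length (q₁.take_spec hs)
    rwa [SimpleGraph.Walk.length_append] at this
  have hmin : Nat.find hex ≤ (p.dropUntil w₁' hps).length := by
    by_contra hlt
    push_neg at hlt
    exact Nat.find_min hex hlt ⟨w₁', ⟨hw₁'W, hps⟩, rfl⟩
  have hzero : (q₁.takeUntil w₁' hs).length = 0 := by
    rw [key] at hmin
    omega
  have hww : w₁ = w₁' := SimpleGraph.Walk.eq_of_length_eq_zero hzero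
  subst hww
  -- now show w₁ = w₂
  have hw12 : w₁ = w₂ := by
    by_contra hne
    have hsplit : q₁.support = (q₁.takeUntil w₂ hw₂).support ++ q₂.support.tail := by
      conv_lhs => rw [← q₁.take_spec hw₂]
      rw [SimpleGraph.Walk.support_append]
    have hnodup := hq₁.support_nodup
    rw [hsplit, List.nodup_append] at hnodup
    have h1mem : w₁ ∈ (q₁.takeUntil w₂ hw₂).support := SimpleGraph.Walk.start_mem_support _
    have h2mem : w₁ ∈ q₂.support.tail := by
      have := hw₁'
      rw [q₂.support_eq_cons] at this
      rcases List.mem_cons.mp this with h | h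
      · exact absurd h hne
      · exact h
    exact hnodup.2.2 w₁ h1mem w₁ h2mem rfl
  refine ⟨w₁, ⟨hw₁W, hw12 ▸ hw₂W⟩, fun r hr => ?_⟩
  rw [tree_path_eq hG r p hr hp]
  exact hw₁p

lemma blockEquiv_inter (hG : G.IsTree) {W₁ W₂ U : Set S}
    (h1 : BlockEquiv G V W₁ U) (h2 : BlockEquiv G V W₂ U) :
    BlockEquiv G V (W₁ ∩ W₂) U :=
  ⟨blocks_inter hG h1 h2, fun u hu v hv => h1.2 u hu.1 v hv⟩

lemma blockEquiv_union {W₁ W₂ U : Set S}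
    (h1 : BlockEquiv G V W₁ U) (h2 : BlockEquiv G V W₂ U) :
    BlockEquiv G V (W₁ ∪ W₂) U := by
  constructor
  · intro u hu v hv
    obtain ⟨a, ha, hap⟩ := h1.1 u hu v hv
    exact ⟨a, Or.inl ha, hap⟩
  · intro u hu v hv
    rcases hu with h | h
    · exact h1.2 u h v hv
    · exact h2.2 u h v hv

end Aux

/-- every `∼`-equivalence class contains a unique smallest and a
unique largest element with respect to inclusion. -/
theorem blockEquiv_exists_unique_min_max {S : Type*} [Fintype S] (G : SimpleGraph S)
    (hG : G.IsTree) (V : Set S) (hV : V.Nonempty) (U : Set S) :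
    (∃! m : Set S, BlockEquiv G V m U ∧ ∀ W : Set S, BlockEquiv G V W U → m ⊆ W) ∧
      (∃! M : Set S, BlockEquiv G V M U ∧ ∀ W : Set S, BlockEquiv G V W U → W ⊆ M) := by
  classical
  have hUC : BlockEquiv G V U U := ⟨blocks_refl U, blocks_refl U⟩
  constructor
  · obtain ⟨m, hm, hmin⟩ := Set.Finite.exists_minimalFor id
      {W : Set S | BlockEquiv G V W U} (Set.toFinite _) ⟨U, hUC⟩
    have hsub : ∀ W : Set S, BlockEquiv G V W U → m ⊆ W := by
      intro W hW
      have hiC : BlockEquiv G V (m ∩ W) U := blockEquiv_inter hG hm hW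
      have heq : m = m ∩ W := Set.Subset.antisymm (hmin hiC Set.inter_subset_left) Set.inter_subset_left
      intro x hx
      have hx' : x ∈ m ∩ W := by rw [← heq]; exact hx
      exact hx'.2
    refine ⟨m, ⟨hm, hsub⟩, ?_⟩
    rintro m' ⟨hm', hsub'⟩
    exact subset_antisymm (hsub' m hm) (hsub m' hm')
  · obtain ⟨M, hM, hmax⟩ := Set.Finite.exists_maximalFor id
      {W : Set S | BlockEquiv G V W U} (Set.toFinite _) ⟨U, hUC⟩
    have hsub : ∀ W : Set S, BlockEquiv G V W U → W ⊆ M := by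
      intro W hW
      have huC : BlockEquiv G V (M ∪ W) U := blockEquiv_union hM hW
      have heq : M = M ∪ W := Set.Subset.antisymm Set.subset_union_left (hmax huC Set.subset_union_left)
      intro x hx
      rw [heq]
      exact Or.inr hx
    refine ⟨M, ⟨hM, hsub⟩, ?_⟩
    rintro M' ⟨hM', hsub'⟩
    exact subset_antisymm (hsub M' hM') (hsub' M hM)
end
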